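/- Fix sets X, Y and a partial function a : Y ⇀ X, and let f : X ⇀ Y. Then f is an idempotent of the sandwich semigroup PT_XY^a, i.e., f⬝a⬝f = f, if and only if for every y ∈ ran(f) we have y ∈ dom(a), a(y) ∈ dom(f), and f(a(y)) = y (i.e., the restriction of a⬝f to ran(f) is the identity on ran(f)). -/

import Mathlib

/-- Fix `a : Y ⇀ X` and `f : X ⇀ Y`.  Then `f` is an idempotent of the
sandwich semigroup `PT_XY^a`, i.e. `f⬝a⬝f = f`, iff for every `y ∈ ran f` there is `x` with
`x ∈ a y` and `y ∈ f x` (i.e. `y ∈ dom a`, `a(y) ∈ dom f` and `f(a(y)) = y`). -/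
private theorem mem_comp' {X Y Z : Type*} (f : Y →. Z) (g : X →. Y) (x : X) (z : Z) :
    z ∈ f.comp g x ↔ ∃ y, y ∈ g x ∧ z ∈ f y := by
  simp [PFun.comp_apply, Part.mem_bind_iff]
  exact Part.mem_bind_iff

theorem idempotent_iff_PT {X Y : Type*} (a : Y →. X) (f : X →. Y) :
    f.comp (a.comp f) = f ↔ ∀ y ∈ f.ran, ∃ x : X, x ∈ a y ∧ y ∈ f x := by
  constructor
  · intro h y hy
    obtain ⟨x0, hx0⟩ := hy
    have hx0' := hx0
    rw [← h, mem_comp'] at hx0'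
    obtain ⟨b, hb, hyb⟩ := hx0'
    rw [mem_comp'] at hb
    obtain ⟨y', hy', hba⟩ := hb
    have : y' = y := Part.mem_unique hy' hx0
    subst this
    exact ⟨b, hba, hyb⟩
  · intro h
    apply PFun.ext
    intro x y
    rw [mem_comp']
    constructor
    · rintro ⟨b, hb, hyb⟩
      rw [mem_comp'] at hb
      obtain ⟨y', hy', hba⟩ := hb
      obtain ⟨x', hx', hfx'⟩ := h y' ⟨x, hy'⟩
      have : b = x' := Part.mem_unique hba hx'
      subst this
      have : y = y' := Part.mem_unique hyb hfx'
      subst this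
      exact hy'
    · intro hy
      obtain ⟨x', hx', hfx'⟩ := h y ⟨x, hy⟩
      exact ⟨x', mem_comp' _ _ _ _ |>.mpr ⟨y, hy, hx'⟩, hfx'⟩
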